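/- Let E, Γ be finite index sets, A ∈ {0,1}^{E×Γ}, and (Θ_e)_{e∈E} square-integrable random variables with diagonal covariance matrix K (so K_{ee} = Var(Θ_e) ≥ 0 and off-diagonal entries zero). Suppose b = AᵀΘ satisfies E[b_i] = E[b_j] for all i, j ∈ Γ. Then for all paths i, j, p ∈ Γ: E[(b_p − b_i)(b_i − b_j)] = −∑_{e∈i, e∉j∪p} K_{ee} − ∑_{e∈j∩p, e∉i} K_{ee} ≤ 0, where 'e ∈ γ' means A_{eγ} = 1. -/

import Mathlib

open MeasureTheory Finset

open Classical in
/-- Key computation in the proof of the general sufficient condition for optimality: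
with equal expected path delays and uncorrelated link states, the correlation of
pairwise path-delay differences is nonpositive. -/
theorem stmt_10 {Ω : Type*} [MeasurableSpace Ω] (μ : Measure Ω) [IsProbabilityMeasure μ]
    {E Γ : Type*} [Fintype E] [Fintype Γ] [DecidableEq E]
    (A : E → Γ → ℝ) (hA : ∀ e p, A e p = 0 ∨ A e p = 1)
    (Θ : E → Ω → ℝ) (hΘ : ∀ e, MemLp (Θ e) 2 μ)
    (K : E → E → ℝ)
    (hK : ∀ e l, K e l = (∫ x, Θ e x * Θ l x ∂μ) - (∫ x, Θ e x ∂μ) * (∫ x, Θ l x ∂μ))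
    (hdiag : ∀ e l, e ≠ l → K e l = 0)
    (b : Γ → Ω → ℝ) (hb : ∀ p x, b p x = ∑ e, A e p * Θ e x)
    (hmean : ∀ i j : Γ, ∫ x, b i x ∂μ = ∫ x, b j x ∂μ) :
    ∀ i j p : Γ,
      (∫ x, (b p x - b i x) * (b i x - b j x) ∂μ) =
        -(∑ e ∈ Finset.univ.filter (fun e => A e i = 1 ∧ A e j = 0 ∧ A e p = 0), K e e)
        - ∑ e ∈ Finset.univ.filter (fun e => A e j = 1 ∧ A e p = 1 ∧ A e i = 0), K e e ∧
      (∫ x, (b p x - b i x) * (b i x - b j x) ∂μ) ≤ 0 := by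
  intro i j p
  set m : E → ℝ := fun e => ∫ x, Θ e x ∂μ with hm
  have hint : ∀ e, Integrable (Θ e) μ := fun e => (hΘ e).integrable one_le_two
  have hmul : ∀ e l, Integrable (fun x => Θ e x * Θ l x) μ := by
    intro e l
    have hc2 : (1 : ENNReal) / 1 = 1 / 2 + 1 / 2 := by norm_num [ENNReal.inv_two_add_inv_two]
    have h : MemLp (Θ e • Θ l) 1 μ := (hΘ l).smul (hΘ e)
    exact h.integrable le_rfl
  have hbint : ∀ γ : Γ, (∫ x, b γ x ∂μ) = ∑ e, A e γ * m e := by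
    intro γ
    simp only [hb]
    rw [integral_finset_sum _ (fun e _ => (hint e).const_mul _)]
    simp [hm, integral_const_mul]
  set c : E → ℝ := fun e => A e p - A e i with hc
  set d : E → ℝ := fun e => A e i - A e j with hd
  have hcm : ∑ e, c e * m e = 0 := by
    have h := hmean p i
    rw [hbint, hbint] at h
    simp only [hc, sub_mul]
    rw [Finset.sum_sub_distrib, h, sub_self]
  -- K e e is a variance, hence nonnegative
  have hKnn : ∀ e, 0 ≤ K e e := by
    intro e
    have hv := ProbabilityTheory.variance_eq_sub (hΘ e)
    have hKe : K e e = ProbabilityTheory.variance (Θ e) μ := by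
      rw [hK, hv]
      simp [pow_two]
    rw [hKe]
    exact ProbabilityTheory.variance_nonneg _ _
  have key : (∫ x, (b p x - b i x) * (b i x - b j x) ∂μ)
      = ∑ e, ∑ l, c e * d l * ∫ x, Θ e x * Θ l x ∂μ := by
    have heq : ∀ x, (b p x - b i x) * (b i x - b j x)
        = ∑ e, ∑ l, c e * d l * (Θ e x * Θ l x) := by
      intro x
      simp only [hb, ← Finset.sum_sub_distrib, ← sub_mul]
      rw [Finset.sum_mul_sum]
      exact Finset.sum_congr rfl fun e _ => Finset.sum_congr rfl fun l _ => by
        simp only [hc, hd]; ring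
    simp only [heq]
    rw [integral_finset_sum _ (fun e _ => by
      exact integrable_finset_sum _ (fun l _ => ((hmul e l).const_mul _)))]
    refine Finset.sum_congr rfl fun e _ => ?_
    rw [integral_finset_sum _ (fun l _ => ((hmul e l).const_mul _))]
    exact Finset.sum_congr rfl fun l _ => integral_const_mul _ _
  have key2 : (∑ e, ∑ l, c e * d l * ∫ x, Θ e x * Θ l x ∂μ)
      = ∑ e, c e * d e * K e e := by
    have h1 : ∀ e l, c e * d l * (∫ x, Θ e x * Θ l x ∂μ)
        = c e * d l * K e l + (c e * m e) * (d l * m l) := by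
      intro e l; rw [hK]; simp only [hm]; ring
    calc (∑ e, ∑ l, c e * d l * ∫ x, Θ e x * Θ l x ∂μ)
        = ∑ e, ∑ l, (c e * d l * K e l + (c e * m e) * (d l * m l)) := by
          simp_rw [h1]
      _ = (∑ e, ∑ l, c e * d l * K e l) + (∑ e, c e * m e) * (∑ l, d l * m l) := by
          rw [Finset.sum_mul_sum, ← Finset.sum_add_distrib]
          exact Finset.sum_congr rfl fun e _ => by rw [← Finset.sum_add_distrib]
      _ = ∑ e, c e * d e * K e e := by
          rw [hcm, zero_mul, add_zero]
          refine Finset.sum_congr rfl fun e _ => ?_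
          exact Finset.sum_eq_single e
            (fun l _ hl => by rw [hdiag e l (Ne.symm hl), mul_zero])
            (fun h => absurd (Finset.mem_univ e) h)
  have hterm : ∀ e, c e * d e * K e e
      = (if A e i = 1 ∧ A e j = 0 ∧ A e p = 0 then -K e e else 0)
      + (if A e j = 1 ∧ A e p = 1 ∧ A e i = 0 then -K e e else 0) := by
    intro e
    rcases hA e i with h1 | h1 <;> rcases hA e j with h2 | h2 <;> rcases hA e p with h3 | h3 <;>
      simp only [hc, hd, h1, h2, h3] <;> norm_num
  have key3 : (∑ e, c e * d e * K e e)
      = -(∑ e ∈ Finset.univ.filter (fun e => A e i = 1 ∧ A e j = 0 ∧ A e p = 0), K e e)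
        - ∑ e ∈ Finset.univ.filter (fun e => A e j = 1 ∧ A e p = 1 ∧ A e i = 0), K e e := by
    simp_rw [hterm]
    rw [Finset.sum_add_distrib, ← Finset.sum_filter, ← Finset.sum_filter]
    simp [Finset.sum_neg_distrib]
    ring
  have heqfinal := key.trans (key2.trans key3)
  refine ⟨heqfinal, ?_⟩
  rw [heqfinal]
  have h1 : 0 ≤ ∑ e ∈ Finset.univ.filter (fun e => A e i = 1 ∧ A e j = 0 ∧ A e p = 0), K e e :=
    Finset.sum_nonneg fun e _ => hKnn e
  have h2 : 0 ≤ ∑ e ∈ Finset.univ.filter (fun e => A e j = 1 ∧ A e p = 1 ∧ A e i = 0), K e e :=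
    Finset.sum_nonneg fun e _ => hKnn e
  linarith
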